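/- Let α^d_{d-t+1} be the matrix of the map α_{d-t+1}: C_{d-t+1}(x,1^d) → C_{d-t+1}(-x-2d,1^d) with respect to the reverse-lexicographic basis order. Then α^d_{d-t+1} has block form [[(-1)^d · Id_{binom(d-1,t-2)}, γ], [0, α^{d-1}_{d-t}]], where the blocks are indexed by whether the composition has last part λ_t = 0 or λ_t ≥ 1, and the lower-right block equals the matrix α^{d-1}_{d-t} for parameter d-1 (via (λ_t,…,λ_1) ↦ (λ_t - 1, λ_{t-1},…,λ_1)). In particular det(α^d_{d-t+1}) = ±1. -/

import Mathlib

open Finset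

/-- Generalized binomial coefficient `binom(a, b)` for integers `a, b`:
`a(a-1)⋯(a-b+1)/b!` when `b ≥ 0`, and `0` when `b < 0`. -/
noncomputable def zbinom (a b : ℤ) : ℤ := if 0 ≤ b then Ring.choose a b.toNat else 0

/-- `S(s) = ∑_{m=1}^{s} (μ_m + λ_m)`. -/
def Sfun (lam mu : ℕ → ℕ) (s : ℕ) : ℤ := ∑ m ∈ Finset.Icc 1 s, ((mu m : ℤ) + (lam m : ℤ))

/-- `A_k(λ,μ) = ∏_{s=0}^{k-2} binom(S(s)+μ_{s+1}+2s, S(s)+λ_{s+1}+2s)`. -/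
noncomputable def Afun (lam mu : ℕ → ℕ) (k : ℕ) : ℤ :=
  ∏ s ∈ Finset.range (k - 1),
    zbinom (Sfun lam mu s + (mu (s+1) : ℤ) + 2 * s) (Sfun lam mu s + (lam (s+1) : ℤ) + 2 * s)

/-- `B_k(λ,μ) = ∏_{s=k+1}^{t-1} binom(S(s-1)+μ_s+μ_{s+1}+2s-1, S(s)+2s-1)`. -/
noncomputable def Bfun (t : ℕ) (lam mu : ℕ → ℕ) (k : ℕ) : ℤ :=
  ∏ s ∈ Finset.Icc (k + 1) (t - 1),
    zbinom (Sfun lam mu (s - 1) + (mu s : ℤ) + (mu (s+1) : ℤ) + 2 * s - 1)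
      (Sfun lam mu s + 2 * s - 1)

/-- `g_k(λ,μ;z) = binom(S(k-1)+μ_k+2(k-1), S(k-1)+λ_k-z+2(k-1))`. -/
noncomputable def gfun (lam mu : ℕ → ℕ) (k : ℕ) (z : ℤ) : ℤ :=
  zbinom (Sfun lam mu (k - 1) + (mu k : ℤ) + 2 * ((k : ℤ) - 1))
    (Sfun lam mu (k - 1) + (lam k : ℤ) - z + 2 * ((k : ℤ) - 1))

/-- `h_k(λ,μ;z) = binom(S(k)+μ_{k+1}-z+2(k-1)+2, S(k)+2(k-1)+1)`. -/
noncomputable def hfun (lam mu : ℕ → ℕ) (k : ℕ) (z : ℤ) : ℤ :=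
  zbinom (Sfun lam mu k + (mu (k+1) : ℤ) - z + 2 * ((k : ℤ) - 1) + 2)
    (Sfun lam mu k + 2 * ((k : ℤ) - 1) + 1)

/-- Reindexing of a tuple `f : Fin n → ℕ` (with `f ⟨m-1⟩` giving the part with subscript
`m`) as a function `ℕ → ℕ` supported on `{1, …, n}`. -/
def toFun (n : ℕ) (f : Fin n → ℕ) : ℕ → ℕ :=
  fun m => if h : 1 ≤ m ∧ m ≤ n then f ⟨m - 1, by omega⟩ else 0

/-- The weak composition `(λ_t, …, λ_{j+1}, i-1, λ_j - i, λ_{j-1}, …, λ_1)` (with `t+1`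
parts, subscripts `1, …, t+1`) obtained from `λ = (λ_t, …, λ_1)` by splitting the `j`-th
interval at its `i`-th edge. -/
def split (lam : ℕ → ℕ) (j i : ℕ) : ℕ → ℕ := fun m =>
  if m < j then lam m else if m = j then lam j - i else if m = j + 1 then i - 1 else lam (m - 1)

/-- The coefficient of `f_ν` in `∂(f_λ)`, for the arithmetic complex `C_•(w_0, 1^d)` with
`w_0 = x`: the differential is
`∂(f_{(λ_t,…,λ_1)}) = ∑_{j=1}^{t} ∑_{i=1}^{λ_j} (-1)^{t-j} binom(ω(I_{λ_j}), ω(I_{λ_j}∖{i}))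
f_{(λ_t,…,λ_{j+1},i-1,λ_j-i,λ_{j-1},…,λ_1)}`,
where `λ` has `t` parts, `ω(I_{λ_j}) = λ_j + 1` for `j < t` and `x + λ_t` for `j = t`
(the leftmost interval contains the vertex of weight `w_0 = x`), and
`ω(I_{λ_j}∖{i}) = λ_j - i + 1`. -/
noncomputable def Dmat (x : ℤ) (t : ℕ) (nu lam : ℕ → ℕ) : ℤ :=
  ∑ j ∈ Finset.Icc 1 t, ∑ i ∈ Finset.Icc 1 (lam j),
    if ∀ m ∈ Finset.Icc 1 (t + 1), nu m = split lam j i m then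
      (-1 : ℤ) ^ (t - j) *
        (if j = t then zbinom (x + (lam t : ℤ)) ((lam t : ℤ) - i + 1)
          else zbinom ((lam j : ℤ) + 1) ((lam j : ℤ) - i + 1))
    else 0

/-- The coefficient of `f_μ` in `α(f_λ)`, for weak compositions `λ, μ` with `t` parts:
`(-1)^{d-μ_t} ∏_{s=0}^{t-2} binom(∑_{j≤s}(λ_j+μ_j)+μ_{s+1}+2s, ∑_{j≤s}(λ_j+μ_j)+λ_{s+1}+2s)`. -/
noncomputable def Amat (d t : ℕ) (lam mu : ℕ → ℕ) : ℤ :=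
  (-1 : ℤ) ^ (d - mu t) * Afun lam mu t

lemma zbinom_nat' (a b : ℤ) (ha : 0 ≤ a) (hb : 0 ≤ b) :
    zbinom a b = (a.toNat).choose b.toNat := by
  rw [zbinom, if_pos hb, ← Ring.choose_natCast (R := ℤ) a.toNat b.toNat,
    Int.toNat_of_nonneg ha]

lemma zbinom_self' (a : ℤ) (ha : 0 ≤ a) : zbinom a a = 1 := by
  rw [zbinom_nat' a a ha ha, Nat.choose_self]
  simp

lemma zbinom_zero_of_lt' (a b : ℤ) (ha : 0 ≤ a) (hab : a < b) : zbinom a b = 0 := by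
  rw [zbinom_nat' a b ha (ha.trans hab.le), Nat.choose_eq_zero_of_lt (by omega)]
  simp

lemma Sfun_nonneg' (lam mu : ℕ → ℕ) (s : ℕ) : 0 ≤ Sfun lam mu s :=
  Finset.sum_nonneg fun m _ => by positivity

lemma Afun_eq_one' (lam mu : ℕ → ℕ) (t : ℕ)
    (h : ∀ j ∈ Finset.Icc 1 (t - 1), lam j = mu j) : Afun lam mu t = 1 := by
  unfold Afun
  apply Finset.prod_eq_one
  intro s hs
  rw [Finset.mem_range] at hs
  rw [h (s + 1) (Finset.mem_Icc.2 ⟨by omega, by omega⟩)]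
  refine zbinom_self' _ ?_
  have := Sfun_nonneg' lam mu s
  positivity

lemma Afun_eq_zero_of_lt (t : ℕ) (lam mu : ℕ → ℕ) {j : ℕ} (hj1 : 1 ≤ j) (hjt : j ≤ t - 1)
    (hlt : mu j < lam j) : Afun lam mu t = 0 := by
  unfold Afun
  apply Finset.prod_eq_zero (i := j - 1) (Finset.mem_range.2 (by omega))
  have hs : j - 1 + 1 = j := by omega
  rw [hs]
  have hS := Sfun_nonneg' lam mu (j - 1)
  have hmu : (mu j : ℤ) < (lam j : ℤ) := by exact_mod_cast hlt
  apply zbinom_zero_of_lt'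
  · linarith [Int.natCast_nonneg (mu j), Int.natCast_nonneg (j - 1)]
  · linarith

lemma exists_gt' (t : ℕ) (ht : 1 ≤ t) (lam mu : ℕ → ℕ)
    (hsum : (∑ m ∈ Finset.Icc 1 t, (lam m : ℤ)) = ∑ m ∈ Finset.Icc 1 t, (mu m : ℤ))
    (hne : ¬ ∀ j ∈ Finset.Icc 1 t, lam j = mu j) (hle : lam t ≤ mu t) :
    ∃ j, 1 ≤ j ∧ j ≤ t - 1 ∧ mu j < lam j := by
  by_contra h
  push_neg at h
  have hle' : ∀ j ∈ Finset.Icc 1 t, (lam j : ℤ) ≤ (mu j : ℤ) := by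
    intro j hj
    rw [Finset.mem_Icc] at hj
    rcases eq_or_lt_of_le hj.2 with rfl | hlt
    · exact_mod_cast hle
    · exact_mod_cast h j hj.1 (by omega)
  have := (Finset.sum_eq_sum_iff_of_le hle').1 hsum
  exact hne fun j hj => by exact_mod_cast this j hj

lemma Afun_eq_zero' (t : ℕ) (ht : 1 ≤ t) (lam mu : ℕ → ℕ)
    (hsum : (∑ m ∈ Finset.Icc 1 t, (lam m : ℤ)) = ∑ m ∈ Finset.Icc 1 t, (mu m : ℤ))
    (hne : ¬ ∀ j ∈ Finset.Icc 1 t, lam j = mu j) (hle : lam t ≤ mu t) :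
    Afun lam mu t = 0 := by
  obtain ⟨j, hj1, hjt, hlt⟩ := exists_gt' t ht lam mu hsum hne hle
  exact Afun_eq_zero_of_lt t lam mu hj1 hjt hlt

lemma toFun_succ' (t : ℕ) (f : Fin t → ℕ) (k : Fin t) : toFun t f (1 + (k : ℕ)) = f k := by
  unfold toFun
  rw [dif_pos ⟨by omega, by omega⟩]
  congr 1
  apply Fin.ext
  show 1 + (k : ℕ) - 1 = (k : ℕ)
  omega

lemma sum_toFun' (t : ℕ) (f : Fin t → ℕ) :
    ∑ m ∈ Finset.Icc 1 t, (toFun t f m : ℤ) = ∑ i : Fin t, (f i : ℤ) := by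
  rw [show Finset.Icc 1 t = Finset.Ico 1 (t + 1) by ext; simp only [Finset.mem_Icc, Finset.mem_Ico]; omega,
    Finset.sum_Ico_eq_sum_range]
  simp only [Nat.add_sub_cancel]
  rw [← Fin.sum_univ_eq_sum_range (fun k => (toFun t f (1 + k) : ℤ)) t]
  apply Finset.sum_congr rfl
  intro i _
  rw [toFun_succ']

lemma toFun_inj' (t : ℕ) (f g : Fin t → ℕ)
    (h : ∀ m ∈ Finset.Icc 1 t, toFun t f m = toFun t g m) : f = g := by
  funext k
  have hk := h (1 + (k : ℕ)) (Finset.mem_Icc.2 ⟨by omega, by omega⟩)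
  rwa [toFun_succ', toFun_succ'] at hk

/-- Corollary 3.5: with respect to the reverse-lexicographic basis order, the matrix
`α^d_{d-t+1}` has block form `[[(-1)^d · Id, γ], [0, α^{d-1}_{d-t}]]`, where the blocks are
indexed by whether the last part is `0` or `≥ 1`, the lower-right block being the matrix
for parameter `d-1` via `(λ_t, …, λ_1) ↦ (λ_t - 1, λ_{t-1}, …, λ_1)`. In particular
`det(α^d_{d-t+1}) = ±1`. -/
theorem stmt16 (d t : ℕ) (hd : 1 ≤ d) (ht : 1 ≤ t) (htd : t ≤ d + 1) :
    (∀ lam mu : ℕ → ℕ,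
      (∑ m ∈ Finset.Icc 1 t, (lam m : ℤ)) = (d : ℤ) - t + 1 →
      (∑ m ∈ Finset.Icc 1 t, (mu m : ℤ)) = (d : ℤ) - t + 1 →
      -- upper-left block: `(-1)^d` times the identity
      (lam t = 0 → mu t = 0 →
        Amat d t lam mu =
          if ∀ j ∈ Finset.Icc 1 t, lam j = mu j then (-1 : ℤ) ^ d else 0) ∧
      -- lower-left block: zero
      (lam t = 0 → 1 ≤ mu t → Amat d t lam mu = 0) ∧
      -- lower-right block: the matrix `α^{d-1}_{d-t}`
      (1 ≤ lam t → 1 ≤ mu t →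
        Amat d t lam mu =
          Amat (d - 1) t (fun m => if m = t then lam t - 1 else lam m)
            (fun m => if m = t then mu t - 1 else mu m))) ∧
    ((Matrix.of
        (fun lam mu : {a // a ∈ Finset.Nat.antidiagonalTuple t (d + 1 - t)} =>
          Amat d t (toFun t lam.1) (toFun t mu.1))).det = 1 ∨
      (Matrix.of
        (fun lam mu : {a // a ∈ Finset.Nat.antidiagonalTuple t (d + 1 - t)} =>
          Amat d t (toFun t lam.1) (toFun t mu.1))).det = -1) := by
  constructor
  · intro lam mu hl hm
    have hsum : (∑ m ∈ Finset.Icc 1 t, (lam m : ℤ)) = ∑ m ∈ Finset.Icc 1 t, (mu m : ℤ) :=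
      hl.trans hm.symm
    refine ⟨?_, ?_, ?_⟩
    · intro hl0 hm0
      unfold Amat
      by_cases heq : ∀ j ∈ Finset.Icc 1 t, lam j = mu j
      · rw [if_pos heq]
        have h1 : Afun lam mu t = 1 :=
          Afun_eq_one' lam mu t fun j hj => heq j
            (Finset.mem_Icc.2 ⟨(Finset.mem_Icc.1 hj).1,
              by have := (Finset.mem_Icc.1 hj).2; omega⟩)
        rw [h1, mul_one, hm0, Nat.sub_zero]
      · rw [if_neg heq, Afun_eq_zero' t ht lam mu hsum heq (by omega), mul_zero]
    · intro hl0 hm1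
      have hne : ¬ ∀ j ∈ Finset.Icc 1 t, lam j = mu j := by
        intro hc
        have := hc t (Finset.mem_Icc.2 ⟨ht, le_refl t⟩)
        omega
      unfold Amat
      rw [Afun_eq_zero' t ht lam mu hsum hne (by omega), mul_zero]
    · intro hl1 hm1
      have hlam' : ∀ m, m ≠ t → (fun m => if m = t then lam t - 1 else lam m) m = lam m :=
        fun m hmt => if_neg hmt
      have hmu' : ∀ m, m ≠ t → (fun m => if m = t then mu t - 1 else mu m) m = mu m :=
        fun m hmt => if_neg hmt
      have hA : Afun (fun m => if m = t then lam t - 1 else lam m)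
          (fun m => if m = t then mu t - 1 else mu m) t = Afun lam mu t := by
        unfold Afun
        apply Finset.prod_congr rfl
        intro s hs
        rw [Finset.mem_range] at hs
        have hS : Sfun (fun m => if m = t then lam t - 1 else lam m)
            (fun m => if m = t then mu t - 1 else mu m) s = Sfun lam mu s := by
          unfold Sfun
          apply Finset.sum_congr rfl
          intro m hm'
          rw [Finset.mem_Icc] at hm'
          rw [hmu' m (by omega), hlam' m (by omega)]
        rw [hS, hmu' (s + 1) (by omega), hlam' (s + 1) (by omega)]
      unfold Amat
      rw [hA]
      congr 1
      rw [show (fun m => if m = t then mu t - 1 else mu m) t = mu t - 1 from if_pos rfl]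
      congr 1
      omega
  · -- determinant
    set I := {a // a ∈ Finset.Nat.antidiagonalTuple t (d + 1 - t)} with hI
    set M : Matrix I I ℤ := Matrix.of
      (fun lam mu : I => Amat d t (toFun t lam.1) (toFun t mu.1)) with hM
    have hsumI : ∀ a : I, (∑ m ∈ Finset.Icc 1 t, (toFun t a.1 m : ℤ)) = (d : ℤ) - t + 1 := by
      intro a
      rw [sum_toFun']
      have h0 := (Finset.Nat.mem_antidiagonalTuple).1 a.2
      have h1 : (∑ i : Fin t, (a.1 i : ℤ)) = ((d + 1 - t : ℕ) : ℤ) := by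
        exact_mod_cast congrArg (Nat.cast : ℕ → ℤ) h0
      rw [h1]
      omega
    have hboundN : ∀ a : I, toFun t a.1 t ≤ d + 1 - t := by
      intro a
      have hb : (toFun t a.1 t : ℤ) ≤ (d : ℤ) - t + 1 := by
        rw [← hsumI a]
        exact Finset.single_le_sum (f := fun m => (toFun t a.1 m : ℤ))
          (fun m _ => Int.natCast_nonneg _) (Finset.mem_Icc.2 ⟨ht, le_refl t⟩)
      omega
    letI : LinearOrder I := LinearOrder.lift'
      (fun a : I => toLex (((d + 1 - t) - toFun t a.1 t, ((Fintype.equivFin I) a : ℕ)) : ℕ × ℕ))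
      (fun a b hab => by
        have h2 := congrArg (fun p => (ofLex p).2) hab
        simp only at h2
        exact (Fintype.equivFin I).injective (Fin.ext h2))
    have hdet : M.det = ∏ i : I, M i i := by
      refine Matrix.det_of_upperTriangular ?_
      intro i j hij
      have hf : toLex (((d + 1 - t) - toFun t j.1 t, ((Fintype.equivFin I) j : ℕ)) : ℕ × ℕ) <
          toLex (((d + 1 - t) - toFun t i.1 t, ((Fintype.equivFin I) i : ℕ)) : ℕ × ℕ) := hij
      rw [Prod.Lex.lt_iff] at hf
      have hkey : toFun t i.1 t ≤ toFun t j.1 t ∧ i ≠ j := by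
        rcases hf with h1 | ⟨h1, h2⟩
        · have hbi := hboundN i
          have hbj := hboundN j
          simp only [ofLex_toLex] at h1
          have hlt : toFun t i.1 t < toFun t j.1 t := by omega
          exact ⟨hlt.le, fun hc => by rw [hc] at hlt; omega⟩
        · simp only [ofLex_toLex] at h1 h2
          have hbi := hboundN i
          have hbj := hboundN j
          have heq : toFun t i.1 t = toFun t j.1 t := by omega
          refine ⟨heq.le, fun hc => ?_⟩
          rw [hc] at h2
          omega
      have hne : ¬ ∀ m ∈ Finset.Icc 1 t, toFun t i.1 m = toFun t j.1 m := by
        intro hc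
        exact hkey.2 (Subtype.ext (toFun_inj' t i.1 j.1 hc))
      show Amat d t (toFun t i.1) (toFun t j.1) = 0
      unfold Amat
      rw [Afun_eq_zero' t ht _ _ ((hsumI i).trans (hsumI j).symm) hne hkey.1, mul_zero]
    have hdiag : ∀ i : I, M i i = (-1 : ℤ) ^ (d - toFun t i.1 t) := by
      intro i
      show Amat d t (toFun t i.1) (toFun t i.1) = _
      unfold Amat
      rw [Afun_eq_one' _ _ t (fun j _ => rfl), mul_one]
    rw [hdet, Finset.prod_congr rfl (fun i _ => hdiag i), Finset.prod_pow_eq_pow_sum]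
    rcases Nat.even_or_odd (∑ i : I, (d - toFun t i.1 t)) with he | ho
    · left
      exact he.neg_one_pow
    · right
      exact ho.neg_one_pow
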